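/- Let C be a finite candidate set with p ∈ C, let s : C → ℤ be arbitrary (the First-Last scores of the candidates from the registered voters), and let W₁ and W₂ be finite multisets of First-Last votes on C in which no vote has p as its first or last component. Let k, ℓ ∈ ℕ, assume b_x := Σ_{a ∈ C∖{p}} (s(p) − s(a)) ≥ 0, and let M be an integer with M ≥ |W₁| + |W₂| + |s(p) − s(a)| for every a ∈ C∖{p}. Define a loopless multigraph H: its vertices are two copies a and a′ of each candidate a ∈ C∖{p}, together with one further vertex x; for each vote (b, a) in W₁ there is one red edge with endpoints a and b′; for each vote (b, a) in W₂ there is one blue edge with endpoints a and b′; in addition, for every a ∈ C∖{p} there are M parallel uncolored edges with endpoints a and a′ and M parallel uncolored edges with endpoints x and a′. Set capacities b(a′) = M and b(a) = M + s(a) − s(p) for every a ∈ C∖{p}, and b(x) = b_x. Then there exist submultisets W₁′ of W₁ and W₂′ of W₂ with |W₁′| = k and |W₂′| = ℓ such that for every a ∈ C∖{p} one has s(a) + #{votes in W₁′ + W₂′ with first component a} − #{votes in W₁′ + W₂′ with last component a} ≤ s(p) (i.e., adding exactly those k + ℓ votes makes p a First-Last winner), if and only if H has a perfect b-matching containing exactly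 k red edges and exactly ℓ blue edges. -/
import Mathlib

section Helpers

lemma card_filter_disjSum {α β : Type*} (s : Finset α) (t : Finset β)
    (q : α ⊕ β → Prop) [DecidablePred q] :
    ((s.disjSum t).filter q).card
      = (s.filter (fun x => q (Sum.inl x))).card + (t.filter (fun x => q (Sum.inr x))).card := by
  have h : (s.disjSum t).filter q
      = (s.filter (fun x => q (Sum.inl x))).disjSum (t.filter (fun x => q (Sum.inr x))) := by
    ext x
    cases x <;> simp
  rw [h, Finset.card_disjSum]

lemma card_filter_lt_fin (M t : ℕ) (ht : t ≤ M) :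
    (Finset.univ.filter fun j : Fin M => (j : ℕ) < t).card = t := by
  have h : (Finset.univ.filter fun j : Fin M => (j : ℕ) < t).map Fin.valEmbedding
      = Finset.range t := by
    ext n
    simp only [Finset.mem_map, Finset.mem_filter, Finset.mem_univ, true_and,
      Fin.valEmbedding_apply, Finset.mem_range]
    constructor
    · rintro ⟨a, h1, rfl⟩; exact h1
    · intro hn; exact ⟨⟨n, lt_of_lt_of_le hn ht⟩, hn, rfl⟩
  rw [← Finset.card_map Fin.valEmbedding, h, Finset.card_range]

lemma card_slice {γ : Type*} [DecidableEq γ] [Fintype γ] (M : ℕ) (m : γ → ℕ)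
    (hm : ∀ a, m a ≤ M) (a : γ) :
    ((Finset.univ.filter (fun q : γ × Fin M => (q.2 : ℕ) < m q.1)).filter
      (fun q => q.1 = a)).card = m a := by
  rw [Finset.filter_filter]
  have h : (Finset.univ.filter fun q : γ × Fin M => (q.2 : ℕ) < m q.1 ∧ q.1 = a)
      = {a} ×ˢ (Finset.univ.filter fun j : Fin M => (j : ℕ) < m a) := by
    ext ⟨b, j⟩
    simp only [Finset.mem_filter, Finset.mem_univ, true_and, Finset.mem_product,
      Finset.mem_singleton]
    constructor
    · rintro ⟨h1, rfl⟩; exact ⟨rfl, h1⟩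
    · rintro ⟨rfl, h1⟩; exact ⟨h1, rfl⟩
  rw [h, Finset.card_product, Finset.card_singleton, one_mul, card_filter_lt_fin _ _ (hm a)]

lemma univ_val_map_get {α : Type*} (W : Multiset α) :
    Multiset.map W.toList.get (Finset.univ : Finset (Fin W.toList.length)).val = W := by
  rw [Fin.univ_val_map]
  rw [show (List.ofFn W.toList.get) = W.toList from List.ofFn_get _]
  exact Multiset.coe_toList W

lemma map_get_le {α : Type*} (W : Multiset α) (I : Finset (Fin W.toList.length)) :
    Multiset.map W.toList.get I.val ≤ W := by
  conv_rhs => rw [← univ_val_map_get W]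
  exact Multiset.map_le_map (Finset.val_le_iff.mpr (Finset.subset_univ I))

lemma exists_index_finset {α : Type*} {W W' : Multiset α} (h : W' ≤ W) :
    ∃ I : Finset (Fin W.toList.length), Multiset.map W.toList.get I.val = W' := by
  have h2 : (W'.toList : Multiset α) ≤ (W.toList : Multiset α) := by simpa using h
  rw [Multiset.coe_le] at h2
  obtain ⟨l, hl1, hl2⟩ := h2
  obtain ⟨f, hf⟩ := List.sublist_iff_exists_fin_orderEmbedding_get_eq.mp hl2
  refine ⟨Finset.univ.map ⟨f, f.injective⟩, ?_⟩
  rw [Finset.map_val, Multiset.map_map]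
  calc Multiset.map (W.toList.get ∘ ⇑(⟨⇑f, f.injective⟩ : Fin l.length ↪ Fin W.toList.length))
        (Finset.univ : Finset (Fin l.length)).val
      = Multiset.map l.get (Finset.univ : Finset (Fin l.length)).val := by
        congr 1
        funext i
        exact (hf i).symm
    _ = ↑l := by rw [Fin.univ_val_map, show (List.ofFn l.get) = l from List.ofFn_get _]
    _ = ↑W'.toList := Quot.sound hl1
    _ = W' := Multiset.coe_toList W'

lemma card_filter_map_index {α : Type*} (W : Multiset α) (I : Finset (Fin W.toList.length))
    (q : α → Prop) [DecidablePred q] :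
    Multiset.card ((Multiset.map W.toList.get I.val).filter q)
      = (I.filter fun i => q (W.toList.get i)).card := by
  rw [← Multiset.countP_eq_card_filter, Multiset.countP_map]
  rfl

end Helpers

/-- Vertex set of the multigraph `H`: an unprimed copy `a` and a primed copy `a′` of each
candidate `a ≠ p`, together with one further vertex `x`. -/
abbrev FLVert (C : Type) (p : C) : Type := ({a : C // a ≠ p} ⊕ {a : C // a ≠ p}) ⊕ Unit

/-- Edge-index set of `H`: one red edge for each vote in `W₁`, one blue edge for each vote
in `W₂`, and for each candidate `a ≠ p`, `M` parallel uncolored edges `a–a′` and `M`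
parallel uncolored edges `x–a′`. -/
abbrev FLEdgeRB (C : Type) [DecidableEq C] (p : C)
    (W₁ W₂ : Multiset ({a : C // a ≠ p} × {a : C // a ≠ p})) (M : ℕ) : Type :=
  (Fin W₁.toList.length ⊕ Fin W₂.toList.length) ⊕
    (({a : C // a ≠ p} × Fin M) ⊕ ({a : C // a ≠ p} × Fin M))

/-- Endpoints of the edges of `H`: the colored edge of a vote `(b, a)` joins the unprimed
copy of `a` to the primed copy of `b`; the uncolored edges join `a` to `a′` and `x` to `a′`. -/
noncomputable def flEndsRB (C : Type) [DecidableEq C] (p : C)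
    (W₁ W₂ : Multiset ({a : C // a ≠ p} × {a : C // a ≠ p})) (M : ℕ) :
    FLEdgeRB C p W₁ W₂ M → Sym2 (FLVert C p)
  | Sum.inl (Sum.inl i) =>
      s(Sum.inl (Sum.inl (W₁.toList.get i).2), Sum.inl (Sum.inr (W₁.toList.get i).1))
  | Sum.inl (Sum.inr j) =>
      s(Sum.inl (Sum.inl (W₂.toList.get j).2), Sum.inl (Sum.inr (W₂.toList.get j).1))
  | Sum.inr (Sum.inl (a, _)) => s(Sum.inl (Sum.inl a), Sum.inl (Sum.inr a))
  | Sum.inr (Sum.inr (a, _)) => s(Sum.inr (), Sum.inl (Sum.inr a))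

/-- Capacities: `b(a) = M + s(a) − s(p)`, `b(a′) = M`, and
`b(x) = Σ_{a ≠ p} (s(p) − s(a))`. -/
def flBval (C : Type) [Fintype C] [DecidableEq C] (p : C) (s : C → ℤ) (M : ℕ) :
    FLVert C p → ℕ
  | Sum.inl (Sum.inl a) => ((M : ℤ) + s a.1 - s p).toNat
  | Sum.inl (Sum.inr _) => M
  | Sum.inr _ => (∑ a ∈ Finset.univ.erase p, (s p - s a)).toNat

section Deg

variable {C : Type} [DecidableEq C] {p : C}
  {W₁ W₂ : Multiset ({a : C // a ≠ p} × {a : C // a ≠ p})} {M : ℕ}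
  (I₁ : Finset (Fin W₁.toList.length)) (I₂ : Finset (Fin W₂.toList.length))
  (A B : Finset ({a : C // a ≠ p} × Fin M))

lemma deg_unprimed (a : {a : C // a ≠ p}) :
    (((I₁.disjSum I₂).disjSum (A.disjSum B)).filter
        (fun e => (Sum.inl (Sum.inl a) : FLVert C p) ∈ flEndsRB C p W₁ W₂ M e)).card
      = (I₁.filter fun i => (W₁.toList.get i).2 = a).card
        + (I₂.filter fun j => (W₂.toList.get j).2 = a).card
        + (A.filter fun q => q.1 = a).card := by
  rw [card_filter_disjSum, card_filter_disjSum, card_filter_disjSum]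
  have e1 : I₁.filter (fun i => (Sum.inl (Sum.inl a) : FLVert C p) ∈
        flEndsRB C p W₁ W₂ M (Sum.inl (Sum.inl i))) = I₁.filter (fun i => (W₁.toList.get i).2 = a) :=
    Finset.filter_congr fun i _ => by simp [flEndsRB, Sym2.mem_iff, eq_comm]
  have e2 : I₂.filter (fun j => (Sum.inl (Sum.inl a) : FLVert C p) ∈
        flEndsRB C p W₁ W₂ M (Sum.inl (Sum.inr j))) = I₂.filter (fun j => (W₂.toList.get j).2 = a) :=
    Finset.filter_congr fun j _ => by simp [flEndsRB, Sym2.mem_iff, eq_comm]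
  have e3 : A.filter (fun q => (Sum.inl (Sum.inl a) : FLVert C p) ∈
        flEndsRB C p W₁ W₂ M (Sum.inr (Sum.inl q))) = A.filter (fun q => q.1 = a) :=
    Finset.filter_congr fun q _ => by simp [flEndsRB, Sym2.mem_iff, eq_comm]
  have e4 : B.filter (fun q => (Sum.inl (Sum.inl a) : FLVert C p) ∈
        flEndsRB C p W₁ W₂ M (Sum.inr (Sum.inr q))) = ∅ :=
    Finset.filter_false_of_mem fun q _ => by simp [flEndsRB, Sym2.mem_iff]
  rw [e1, e2, e3, e4, Finset.card_empty, add_zero]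

lemma deg_primed (a : {a : C // a ≠ p}) :
    (((I₁.disjSum I₂).disjSum (A.disjSum B)).filter
        (fun e => (Sum.inl (Sum.inr a) : FLVert C p) ∈ flEndsRB C p W₁ W₂ M e)).card
      = (I₁.filter fun i => (W₁.toList.get i).1 = a).card
        + (I₂.filter fun j => (W₂.toList.get j).1 = a).card
        + ((A.filter fun q => q.1 = a).card + (B.filter fun q => q.1 = a).card) := by
  rw [card_filter_disjSum, card_filter_disjSum, card_filter_disjSum]
  have e1 : I₁.filter (fun i => (Sum.inl (Sum.inr a) : FLVert C p) ∈
        flEndsRB C p W₁ W₂ M (Sum.inl (Sum.inl i))) = I₁.filter (fun i => (W₁.toList.get i).1 = a) :=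
    Finset.filter_congr fun i _ => by simp [flEndsRB, Sym2.mem_iff, eq_comm]
  have e2 : I₂.filter (fun j => (Sum.inl (Sum.inr a) : FLVert C p) ∈
        flEndsRB C p W₁ W₂ M (Sum.inl (Sum.inr j))) = I₂.filter (fun j => (W₂.toList.get j).1 = a) :=
    Finset.filter_congr fun j _ => by simp [flEndsRB, Sym2.mem_iff, eq_comm]
  have e3 : A.filter (fun q => (Sum.inl (Sum.inr a) : FLVert C p) ∈
        flEndsRB C p W₁ W₂ M (Sum.inr (Sum.inl q))) = A.filter (fun q => q.1 = a) :=
    Finset.filter_congr fun q _ => by simp [flEndsRB, Sym2.mem_iff, eq_comm]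
  have e4 : B.filter (fun q => (Sum.inl (Sum.inr a) : FLVert C p) ∈
        flEndsRB C p W₁ W₂ M (Sum.inr (Sum.inr q))) = B.filter (fun q => q.1 = a) :=
    Finset.filter_congr fun q _ => by simp [flEndsRB, Sym2.mem_iff, eq_comm]
  rw [e1, e2, e3, e4]

lemma deg_x :
    (((I₁.disjSum I₂).disjSum (A.disjSum B)).filter
        (fun e => (Sum.inr () : FLVert C p) ∈ flEndsRB C p W₁ W₂ M e)).card = B.card := by
  rw [card_filter_disjSum, card_filter_disjSum, card_filter_disjSum]
  have e1 : I₁.filter (fun i => (Sum.inr () : FLVert C p) ∈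
        flEndsRB C p W₁ W₂ M (Sum.inl (Sum.inl i))) = ∅ :=
    Finset.filter_false_of_mem fun i _ => by simp [flEndsRB, Sym2.mem_iff]
  have e2 : I₂.filter (fun j => (Sum.inr () : FLVert C p) ∈
        flEndsRB C p W₁ W₂ M (Sum.inl (Sum.inr j))) = ∅ :=
    Finset.filter_false_of_mem fun j _ => by simp [flEndsRB, Sym2.mem_iff]
  have e3 : A.filter (fun q => (Sum.inr () : FLVert C p) ∈
        flEndsRB C p W₁ W₂ M (Sum.inr (Sum.inl q))) = ∅ :=
    Finset.filter_false_of_mem fun q _ => by simp [flEndsRB, Sym2.mem_iff]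
  have e4 : B.filter (fun q => (Sum.inr () : FLVert C p) ∈
        flEndsRB C p W₁ W₂ M (Sum.inr (Sum.inr q))) = B :=
    Finset.filter_true_of_mem fun q _ => by simp [flEndsRB, Sym2.mem_iff]
  rw [e1, e2, e3, e4, Finset.card_empty, Finset.card_empty, Finset.card_empty]
  omega

lemma card_red :
    (((I₁.disjSum I₂).disjSum (A.disjSum B)).filter
        (fun e => ∃ i, e = Sum.inl (Sum.inl i))).card = I₁.card := by
  rw [card_filter_disjSum, card_filter_disjSum, card_filter_disjSum]
  have e1 : I₁.filter (fun i => ∃ i', (Sum.inl (Sum.inl i) : FLEdgeRB C p W₁ W₂ M)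
        = Sum.inl (Sum.inl i')) = I₁ :=
    Finset.filter_true_of_mem fun i _ => ⟨i, rfl⟩
  have e2 : I₂.filter (fun j => ∃ i', (Sum.inl (Sum.inr j) : FLEdgeRB C p W₁ W₂ M)
        = Sum.inl (Sum.inl i')) = ∅ :=
    Finset.filter_false_of_mem fun j _ => by simp
  have e3 : A.filter (fun q => ∃ i', (Sum.inr (Sum.inl q) : FLEdgeRB C p W₁ W₂ M)
        = Sum.inl (Sum.inl i')) = ∅ :=
    Finset.filter_false_of_mem fun q _ => by simp
  have e4 : B.filter (fun q => ∃ i', (Sum.inr (Sum.inr q) : FLEdgeRB C p W₁ W₂ M)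
        = Sum.inl (Sum.inl i')) = ∅ :=
    Finset.filter_false_of_mem fun q _ => by simp
  rw [e1, e2, e3, e4]
  simp

lemma card_blue :
    (((I₁.disjSum I₂).disjSum (A.disjSum B)).filter
        (fun e => ∃ j, e = Sum.inl (Sum.inr j))).card = I₂.card := by
  rw [card_filter_disjSum, card_filter_disjSum, card_filter_disjSum]
  have e1 : I₁.filter (fun i => ∃ j', (Sum.inl (Sum.inl i) : FLEdgeRB C p W₁ W₂ M)
        = Sum.inl (Sum.inr j')) = ∅ :=
    Finset.filter_false_of_mem fun i _ => by simp
  have e2 : I₂.filter (fun j => ∃ j', (Sum.inl (Sum.inr j) : FLEdgeRB C p W₁ W₂ M)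
        = Sum.inl (Sum.inr j')) = I₂ :=
    Finset.filter_true_of_mem fun j _ => ⟨j, rfl⟩
  have e3 : A.filter (fun q => ∃ j', (Sum.inr (Sum.inl q) : FLEdgeRB C p W₁ W₂ M)
        = Sum.inl (Sum.inr j')) = ∅ :=
    Finset.filter_false_of_mem fun q _ => by simp
  have e4 : B.filter (fun q => ∃ j', (Sum.inr (Sum.inr q) : FLEdgeRB C p W₁ W₂ M)
        = Sum.inl (Sum.inr j')) = ∅ :=
    Finset.filter_false_of_mem fun q _ => by simp
  rw [e1, e2, e3, e4]
  simp

end Deg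
lemma filter_fst_eq {C : Type} [DecidableEq C] {p : C} {n : ℕ}
    (g : Fin n → ({a : C // a ≠ p} × {a : C // a ≠ p})) (I : Finset (Fin n))
    (a : C) (ha : a ≠ p) :
    (I.filter fun i => ((g i).1 : C) = a) = I.filter fun i => (g i).1 = ⟨a, ha⟩ :=
  Finset.filter_congr fun i _ => by simp [Subtype.ext_iff]

lemma filter_snd_eq {C : Type} [DecidableEq C] {p : C} {n : ℕ}
    (g : Fin n → ({a : C // a ≠ p} × {a : C // a ≠ p})) (I : Finset (Fin n))
    (a : C) (ha : a ≠ p) :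
    (I.filter fun i => ((g i).2 : C) = a) = I.filter fun i => (g i).2 = ⟨a, ha⟩ :=
  Finset.filter_congr fun i _ => by simp [Subtype.ext_iff]

theorem stmt5 {C : Type} [Fintype C] [DecidableEq C] (p : C) (s : C → ℤ)
    (W₁ W₂ : Multiset ({a : C // a ≠ p} × {a : C // a ≠ p}))
    (hW₁ : ∀ v ∈ W₁, v.1 ≠ v.2) (hW₂ : ∀ v ∈ W₂, v.1 ≠ v.2)
    (k ℓ : ℕ) (M : ℕ)
    (hbx : 0 ≤ ∑ a ∈ Finset.univ.erase p, (s p - s a))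
    (hM : ∀ a : C, a ≠ p →
      (Multiset.card W₁ : ℤ) + (Multiset.card W₂ : ℤ) + |s p - s a| ≤ (M : ℤ)) :
    (∃ W₁' ≤ W₁, ∃ W₂' ≤ W₂,
        Multiset.card W₁' = k ∧ Multiset.card W₂' = ℓ ∧ ∀ a : C, a ≠ p →
          s a + ((Multiset.card ((W₁' + W₂').filter (fun v => v.1.1 = a))) : ℤ)
              - ((Multiset.card ((W₁' + W₂').filter (fun v => v.2.1 = a))) : ℤ) ≤ s p)
    ↔ ∃ S : Finset (FLEdgeRB C p W₁ W₂ M),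
        (∀ v : FLVert C p,
            (S.filter (fun e => v ∈ flEndsRB C p W₁ W₂ M e)).card = flBval C p s M v) ∧
        (S.filter (fun e => ∃ i, e = Sum.inl (Sum.inl i))).card = k ∧
        (S.filter (fun e => ∃ j, e = Sum.inl (Sum.inr j))).card = ℓ := by
  have hn₁ : W₁.toList.length = Multiset.card W₁ := Multiset.length_toList W₁
  have hn₂ : W₂.toList.length = Multiset.card W₂ := Multiset.length_toList W₂
  -- shorthand for the fiber counts
  set Fc : {a : C // a ≠ p} → Finset (Fin W₁.toList.length) × Finset (Fin W₂.toList.length) → ℕ :=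
    fun a I => (I.1.filter fun i => (W₁.toList.get i).1 = a).card + (I.2.filter fun j => (W₂.toList.get j).1 = a).card
    with hFc
  set Lc : {a : C // a ≠ p} → Finset (Fin W₁.toList.length) × Finset (Fin W₂.toList.length) → ℕ :=
    fun a I => (I.1.filter fun i => (W₁.toList.get i).2 = a).card + (I.2.filter fun j => (W₂.toList.get j).2 = a).card
    with hLc
  constructor
  · rintro ⟨W₁', hle₁, W₂', hle₂, hk, hl, hscore⟩
    obtain ⟨I₁, hI₁⟩ := exists_index_finset hle₁
    obtain ⟨I₂, hI₂⟩ := exists_index_finset hle₂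
    have hkI : I₁.card = k := by
      have h := Multiset.card_map W₁.toList.get I₁.val
      rw [hI₁, hk] at h
      exact h.symm
    have hlI : I₂.card = ℓ := by
      have h := Multiset.card_map W₂.toList.get I₂.val
      rw [hI₂, hl] at h
      exact h.symm
    -- bounds on fiber counts
    have hFb : ∀ a : {a : C // a ≠ p}, Fc a (I₁, I₂) ≤ W₁.toList.length + W₂.toList.length := by
      intro a
      have h1 : (I₁.filter fun i => (W₁.toList.get i).1 = a).card ≤ W₁.toList.length :=
        le_trans (Finset.card_filter_le _ _) (le_trans (Finset.card_le_univ _) (by simp))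
      have h2 : (I₂.filter fun j => (W₂.toList.get j).1 = a).card ≤ W₂.toList.length :=
        le_trans (Finset.card_filter_le _ _) (le_trans (Finset.card_le_univ _) (by simp))
      simp only [hFc]
      omega
    have hLb : ∀ a : {a : C // a ≠ p}, Lc a (I₁, I₂) ≤ W₁.toList.length + W₂.toList.length := by
      intro a
      have h1 : (I₁.filter fun i => (W₁.toList.get i).2 = a).card ≤ W₁.toList.length :=
        le_trans (Finset.card_filter_le _ _) (le_trans (Finset.card_le_univ _) (by simp))
      have h2 : (I₂.filter fun j => (W₂.toList.get j).2 = a).card ≤ W₂.toList.length :=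
        le_trans (Finset.card_filter_le _ _) (le_trans (Finset.card_le_univ _) (by simp))
      simp only [hLc]
      omega
    have habs : ∀ a : {a : C // a ≠ p},
        (W₁.toList.length : ℤ) + W₂.toList.length + |s p - s a.1| ≤ M := by
      intro a
      rw [hn₁, hn₂]
      exact hM a.1 a.2
    -- the score condition in terms of fiber counts
    have hscoreZ : ∀ a : {a : C // a ≠ p},
        s a.1 + (Fc a (I₁, I₂) : ℤ) - (Lc a (I₁, I₂) : ℤ) ≤ s p := by
      intro a
      have h := hscore a.1 a.2
      have hc1 : Multiset.card ((W₁' + W₂').filter (fun v => v.1.1 = a.1)) = Fc a (I₁, I₂) := by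
        rw [← hI₁, ← hI₂, Multiset.filter_add, Multiset.card_add,
          card_filter_map_index, card_filter_map_index, hFc]
        rw [filter_fst_eq W₁.toList.get I₁ a.1 a.2, filter_fst_eq W₂.toList.get I₂ a.1 a.2]
      have hc2 : Multiset.card ((W₁' + W₂').filter (fun v => v.2.1 = a.1)) = Lc a (I₁, I₂) := by
        rw [← hI₁, ← hI₂, Multiset.filter_add, Multiset.card_add,
          card_filter_map_index, card_filter_map_index, hLc]
        rw [filter_snd_eq W₁.toList.get I₁ a.1 a.2, filter_snd_eq W₂.toList.get I₂ a.1 a.2]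
      rw [hc1, hc2] at h
      exact h
    -- the numbers of uncolored edges to use
    set m : {a : C // a ≠ p} → ℕ :=
      fun a => ((M : ℤ) + s a.1 - s p - Lc a (I₁, I₂)).toNat with hm
    set nn : {a : C // a ≠ p} → ℕ :=
      fun a => ((s p - s a.1) + Lc a (I₁, I₂) - Fc a (I₁, I₂)).toNat with hnn
    have hm_le : ∀ a, m a ≤ M := by
      intro a
      have h1 := hscoreZ a
      have h2 := hLb a
      have h3 := habs a
      have h4 : s p - s a.1 ≤ |s p - s a.1| := le_abs_self _
      have h5 : -|s p - s a.1| ≤ s p - s a.1 := neg_abs_le _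
      simp only [hm]
      omega
    have hnn_le : ∀ a, nn a ≤ M := by
      intro a
      have h2 := hLb a
      have h3 := habs a
      have h4 : s p - s a.1 ≤ |s p - s a.1| := le_abs_self _
      simp only [hnn]
      omega
    refine ⟨(I₁.disjSum I₂).disjSum
      ((Finset.univ.filter (fun q : {a : C // a ≠ p} × Fin M => (q.2 : ℕ) < m q.1)).disjSum
       (Finset.univ.filter (fun q : {a : C // a ≠ p} × Fin M => (q.2 : ℕ) < nn q.1))), ?_, ?_, ?_⟩
    · rintro ((a | a) | u)
      · rw [deg_unprimed, card_slice M m hm_le a]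
        simp only [flBval]
        have h1 := hscoreZ a
        have h2 := hLb a
        have h3 := habs a
        have h4 : s p - s a.1 ≤ |s p - s a.1| := le_abs_self _
        have h5 : -|s p - s a.1| ≤ s p - s a.1 := neg_abs_le _
        simp only [hm, hLc, hFc] at *
        omega
      · rw [deg_primed, card_slice M m hm_le a, card_slice M nn hnn_le a]
        simp only [flBval]
        have h1 := hscoreZ a
        have h2 := hLb a
        have h3 := habs a
        have h4 : s p - s a.1 ≤ |s p - s a.1| := le_abs_self _
        have h5 : -|s p - s a.1| ≤ s p - s a.1 := neg_abs_le _
        simp only [hm, hnn, hLc, hFc] at *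
        omega
      · rw [deg_x]
        simp only [flBval]
        have hcard : (Finset.univ.filter
            (fun q : {a : C // a ≠ p} × Fin M => (q.2 : ℕ) < nn q.1)).card
            = ∑ a : {a : C // a ≠ p}, nn a := by
          rw [Finset.card_eq_sum_card_fiberwise
            (f := fun q : {a : C // a ≠ p} × Fin M => q.1) (t := Finset.univ)
            (fun q _ => Finset.mem_univ q.1)]
          exact Finset.sum_congr rfl fun a _ => card_slice M nn hnn_le a
        rw [hcard]
        -- now compute the sum
        have hsumF : ∑ a : {a : C // a ≠ p}, Fc a (I₁, I₂) = I₁.card + I₂.card := by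
          simp only [hFc]
          rw [Finset.sum_add_distrib,
            ← Finset.card_eq_sum_card_fiberwise
              (f := fun i => (W₁.toList.get i).1) (t := Finset.univ) (fun i _ => Finset.mem_univ _),
            ← Finset.card_eq_sum_card_fiberwise
              (f := fun j => (W₂.toList.get j).1) (t := Finset.univ) (fun j _ => Finset.mem_univ _)]
        have hsumL : ∑ a : {a : C // a ≠ p}, Lc a (I₁, I₂) = I₁.card + I₂.card := by
          simp only [hLc]
          rw [Finset.sum_add_distrib,
            ← Finset.card_eq_sum_card_fiberwise
              (f := fun i => (W₁.toList.get i).2) (t := Finset.univ) (fun i _ => Finset.mem_univ _),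
            ← Finset.card_eq_sum_card_fiberwise
              (f := fun j => (W₂.toList.get j).2) (t := Finset.univ) (fun j _ => Finset.mem_univ _)]
        have hsub : ∑ a : {a : C // a ≠ p}, (s p - s a.1)
            = ∑ a ∈ Finset.univ.erase p, (s p - s a) :=
          (Finset.sum_subtype (p := fun a => a ≠ p) (Finset.univ.erase p)
            (fun x => by simp) (fun a => s p - s a)).symm
        have hkey : ((∑ a : {a : C // a ≠ p}, nn a : ℕ) : ℤ)
            = ∑ a ∈ Finset.univ.erase p, (s p - s a) := by
          push_cast
          have he : ∀ a ∈ (Finset.univ : Finset {a : C // a ≠ p}),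
              ((nn a : ℕ) : ℤ) = (s p - s a.1) + (Lc a (I₁, I₂) : ℤ) - (Fc a (I₁, I₂) : ℤ) := by
            intro a _
            have h1 := hscoreZ a
            simp only [hnn]
            omega
          rw [Finset.sum_congr rfl he, Finset.sum_sub_distrib, Finset.sum_add_distrib, hsub]
          have hF' : ∑ a : {a : C // a ≠ p}, (Fc a (I₁, I₂) : ℤ) = ((I₁.card + I₂.card : ℕ) : ℤ) := by
            rw [← Nat.cast_sum]
            exact_mod_cast hsumF
          have hL' : ∑ a : {a : C // a ≠ p}, (Lc a (I₁, I₂) : ℤ) = ((I₁.card + I₂.card : ℕ) : ℤ) := by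
            rw [← Nat.cast_sum]
            exact_mod_cast hsumL
          rw [hF', hL']
          ring
        omega
    · rw [card_red]
      exact hkI
    · rw [card_blue]
      exact hlI
  · rintro ⟨S, hdeg, hred, hblue⟩
    obtain ⟨I₁, I₂, A, B, rfl⟩ : ∃ I₁ I₂ A B, S = (I₁.disjSum I₂).disjSum (A.disjSum B) :=
      ⟨S.toLeft.toLeft, S.toLeft.toRight, S.toRight.toLeft, S.toRight.toRight, by
        rw [Finset.toLeft_disjSum_toRight, Finset.toLeft_disjSum_toRight,
          Finset.toLeft_disjSum_toRight]⟩
    rw [card_red] at hred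
    rw [card_blue] at hblue
    refine ⟨Multiset.map W₁.toList.get I₁.val, map_get_le W₁ I₁,
            Multiset.map W₂.toList.get I₂.val, map_get_le W₂ I₂, ?_, ?_, ?_⟩
    · rw [Multiset.card_map]; exact hred
    · rw [Multiset.card_map]; exact hblue
    · intro a ha
      have h1 := hdeg (Sum.inl (Sum.inl ⟨a, ha⟩))
      rw [deg_unprimed] at h1
      simp only [flBval] at h1
      have h2 := hdeg (Sum.inl (Sum.inr ⟨a, ha⟩))
      rw [deg_primed] at h2
      simp only [flBval] at h2
      have hc1 : Multiset.card (((Multiset.map W₁.toList.get I₁.val)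
            + (Multiset.map W₂.toList.get I₂.val)).filter (fun v => v.1.1 = a))
          = Fc ⟨a, ha⟩ (I₁, I₂) := by
        rw [Multiset.filter_add, Multiset.card_add,
          card_filter_map_index, card_filter_map_index, hFc]
        rw [filter_fst_eq W₁.toList.get I₁ a ha, filter_fst_eq W₂.toList.get I₂ a ha]
      have hc2 : Multiset.card (((Multiset.map W₁.toList.get I₁.val)
            + (Multiset.map W₂.toList.get I₂.val)).filter (fun v => v.2.1 = a))
          = Lc ⟨a, ha⟩ (I₁, I₂) := by
        rw [Multiset.filter_add, Multiset.card_add,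
          card_filter_map_index, card_filter_map_index, hLc]
        rw [filter_snd_eq W₁.toList.get I₁ a ha, filter_snd_eq W₂.toList.get I₂ a ha]
      rw [hc1, hc2]
      simp only [hFc, hLc] at *
      omega
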